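/- Let x_1, …, x_M ∈ ℝ^k with ∑_{i=1}^M x_i = 0 and ‖x_i‖ ≤ 1 for all i (‖·‖ an arbitrary norm). Then there exists a permutation π of {1,…,M} such that for every r ∈ {1,…,M}, ‖∑_{i=1}^r x_{π(i)}‖ ≤ k. -/

import Mathlib

open Finset

section SteinitzAux

variable {k M : ℕ} {N : (Fin k → ℝ) → ℝ}

lemma N_zero (hN2 : ∀ (c : ℝ) (v : Fin k → ℝ), N (c • v) = |c| * N v) : N (0 : Fin k → ℝ) = 0 := by
  have := hN2 0 0
  simpa using this

lemma N_nonneg (hN1 : ∀ v w : Fin k → ℝ, N (v + w) ≤ N v + N w)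
    (hN2 : ∀ (c : ℝ) (v : Fin k → ℝ), N (c • v) = |c| * N v) (v : Fin k → ℝ) : 0 ≤ N v := by
  have h1 := hN1 v (-v)
  have h2 : N (-v) = N v := by
    have := hN2 (-1) v
    simpa using this
  rw [add_neg_cancel, N_zero hN2, h2] at h1
  linarith

lemma N_sum (hN1 : ∀ v w : Fin k → ℝ, N (v + w) ≤ N v + N w)
    (hN2 : ∀ (c : ℝ) (v : Fin k → ℝ), N (c • v) = |c| * N v)
    {ι : Type*} (s : Finset ι) (f : ι → Fin k → ℝ) :
    N (∑ i ∈ s, f i) ≤ ∑ i ∈ s, N (f i) := by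
  classical
  induction s using Finset.induction_on with
  | empty => simp [N_zero hN2]
  | @insert a s h ih =>
    rw [Finset.sum_insert h, Finset.sum_insert h]
    exact le_trans (hN1 _ _) (by linarith)

lemma reduce (x : Fin M → (Fin k → ℝ)) (A : Finset (Fin M)) (s : ℝ) :
    ∀ n (lam : Fin M → ℝ),
      (∀ i ∈ A, lam i ∈ Set.Icc (0:ℝ) 1) → (∑ i ∈ A, lam i = s) →
      (∑ i ∈ A, lam i • x i = 0) →
      (A.filter (fun i => lam i ≠ 0 ∧ lam i ≠ 1)).card ≤ n →
      ∃ mu : Fin M → ℝ, (∀ i ∈ A, mu i ∈ Set.Icc (0:ℝ) 1) ∧ (∑ i ∈ A, mu i = s) ∧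
        (∑ i ∈ A, mu i • x i = 0) ∧ (A.filter (fun i => mu i ≠ 0 ∧ mu i ≠ 1)).card ≤ k + 1 := by
  intro n
  induction n with
  | zero => exact fun lam h1 h2 h3 h4 => ⟨lam, h1, h2, h3, le_trans h4 (by omega)⟩
  | succ n ih =>
    intro lam h1 h2 h3 h4
    by_cases hle : (A.filter (fun i => lam i ≠ 0 ∧ lam i ≠ 1)).card ≤ k + 1
    · exact ⟨lam, h1, h2, h3, hle⟩
    set F := A.filter (fun i => lam i ≠ 0 ∧ lam i ≠ 1) with hF
    have hFA : F ⊆ A := filter_subset _ _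
    have hcard : k + 1 < F.card := lt_of_not_ge hle
    -- fractional coordinates are strictly between 0 and 1
    have hfrac : ∀ j ∈ F, 0 < lam j ∧ lam j < 1 := by
      intro j hj
      rw [hF, mem_filter] at hj
      obtain ⟨hjA, hj0, hj1⟩ := hj
      obtain ⟨h0, h1⟩ := h1 j hjA
      exact ⟨lt_of_le_of_ne h0 (Ne.symm hj0), lt_of_le_of_ne h1 hj1⟩
    -- a nontrivial linear relation
    have hnli : ¬ LinearIndependent ℝ (fun i : ↥F => ((x i, 1) : (Fin k → ℝ) × ℝ)) := by
      intro h
      have h2 := h.fintype_card_le_finrank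
      rw [Fintype.card_coe] at h2
      simp [Module.finrank_prod, Module.finrank_fintype_fun_eq_card] at h2
      omega
    obtain ⟨g, hg0, i0, hgi0⟩ := Fintype.not_linearIndependent_iff.mp hnli
    classical
    set c : Fin M → ℝ := fun j => if h : j ∈ F then g ⟨j, h⟩ else 0 with hc
    have hcF : ∀ j, j ∉ F → c j = 0 := fun j hj => by simp [hc, hj]
    have hcmem : ∀ (i : ↥F), c ↑i = g i := fun i => by simp [hc, i.2]
    -- sums of c over F
    have hsum1 : ∑ j ∈ F, c j • x j = 0 := by
      have := congrArg Prod.fst hg0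
      rw [Prod.fst_sum] at this
      simp only [Prod.smul_mk] at this
      rw [← Finset.sum_coe_sort F (fun j => c j • x j)]
      rw [show ∑ i : ↥F, c ↑i • x ↑i = ∑ i : ↥F, g i • x ↑i from
        Finset.sum_congr rfl (fun i _ => by rw [hcmem])]
      exact this
    have hsum2 : ∑ j ∈ F, c j = 0 := by
      have := congrArg Prod.snd hg0
      rw [Prod.snd_sum] at this
      simp only [Prod.smul_mk, smul_eq_mul, mul_one] at this
      rw [← Finset.sum_coe_sort F (fun j => c j)]
      rw [show ∑ i : ↥F, c ↑i = ∑ i : ↥F, g i from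
        Finset.sum_congr rfl (fun i _ => by rw [hcmem])]
      exact this
    -- sums of c over A
    have hsum1A : ∑ j ∈ A, c j • x j = 0 := by
      rw [← Finset.sum_subset hFA (fun j _ hj => by rw [hcF j hj, zero_smul])]
      exact hsum1
    have hsum2A : ∑ j ∈ A, c j = 0 := by
      rw [← Finset.sum_subset hFA (fun j _ hj => hcF j hj)]
      exact hsum2
    -- the set of moving coordinates
    set S := F.filter (fun j => c j ≠ 0) with hS
    have hSne : S.Nonempty := ⟨↑i0, by
      rw [hS, mem_filter]
      exact ⟨i0.2, by rw [hcmem]; exact hgi0⟩⟩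
    set d : Fin M → ℝ := fun j => if 0 < c j then (1 - lam j) / c j else lam j / (-c j) with hd
    have hdpos : ∀ j ∈ S, 0 < d j := by
      intro j hj
      rw [hS, mem_filter] at hj
      obtain ⟨hjF, hjc⟩ := hj
      obtain ⟨hl0, hl1⟩ := hfrac j hjF
      by_cases hcj : 0 < c j
      · simp only [hd, if_pos hcj]; exact div_pos (by linarith) hcj
      · simp only [hd, if_neg hcj]
        have : c j < 0 := lt_of_le_of_ne (not_lt.mp hcj) hjc
        exact div_pos hl0 (by linarith)
    obtain ⟨istar, hiS, hmin⟩ := Finset.exists_min_image S d hSne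
    set t := d istar with ht
    have htpos : 0 < t := hdpos istar hiS
    set mu : Fin M → ℝ := fun j => lam j + t * c j with hmu
    -- box constraints for mu
    have hbox : ∀ i ∈ A, mu i ∈ Set.Icc (0:ℝ) 1 := by
      intro i hiA
      by_cases hiS' : i ∈ S
      · have hiF : i ∈ F := (mem_filter.mp hiS').1
        have hci : c i ≠ 0 := (mem_filter.mp hiS').2
        obtain ⟨hl0, hl1⟩ := hfrac i hiF
        have hti : t ≤ d i := hmin i hiS'
        rw [hmu]
        by_cases hcpos : 0 < c i
        · constructor
          · simp only
            nlinarith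
          · have hdi : d i * c i = 1 - lam i := by
              rw [hd]; simp only [if_pos hcpos]
              field_simp
            have : t * c i ≤ d i * c i := mul_le_mul_of_nonneg_right hti (le_of_lt hcpos)
            simp only
            linarith
        · have hcneg : c i < 0 := lt_of_le_of_ne (not_lt.mp hcpos) hci
          constructor
          · have hdi : d i * c i = - lam i := by
              rw [hd]; simp only [if_neg hcpos]
              field_simp
            have : d i * c i ≤ t * c i := mul_le_mul_of_nonpos_right hti (le_of_lt hcneg)
            simp only
            linarith
          · simp only
            nlinarith
      · have hci : c i = 0 := by
          by_cases hiF : i ∈ F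
          · by_contra hne
            exact hiS' (mem_filter.mpr ⟨hiF, hne⟩)
          · exact hcF i hiF
        rw [hmu]
        simp only [hci, mul_zero, add_zero]
        exact h1 i hiA
    -- sum constraints for mu
    have hmusum : ∑ i ∈ A, mu i = s := by
      rw [hmu]
      simp only
      rw [Finset.sum_add_distrib, h2, ← Finset.mul_sum, hsum2A, mul_zero, add_zero]
    have hmuvec : ∑ i ∈ A, mu i • x i = 0 := by
      rw [hmu]
      simp only [add_smul]
      rw [Finset.sum_add_distrib, h3]
      have : ∑ i ∈ A, (t * c i) • x i = t • ∑ i ∈ A, c i • x i := by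
        rw [Finset.smul_sum]
        exact Finset.sum_congr rfl (fun i _ => by rw [smul_smul])
      rw [this, hsum1A, smul_zero]
      simp
    -- mu istar is 0 or 1
    have histar : mu istar = 0 ∨ mu istar = 1 := by
      have hci : c istar ≠ 0 := (mem_filter.mp hiS).2
      have hiF : istar ∈ F := (mem_filter.mp hiS).1
      rw [hmu, ht, hd]
      by_cases hcpos : 0 < c istar
      · right
        simp only [if_pos hcpos]
        field_simp
        ring
      · left
        simp only [if_neg hcpos]
        rw [div_neg, neg_mul, div_mul_cancel₀ _ hci]
        ring
    -- new fractional set is strictly smaller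
    have hsubset : A.filter (fun i => mu i ≠ 0 ∧ mu i ≠ 1) ⊆ F.erase istar := by
      intro j hj
      rw [mem_filter] at hj
      obtain ⟨hjA, hj0, hj1⟩ := hj
      have hjF : j ∈ F := by
        by_contra hjF
        have hcj : c j = 0 := hcF j hjF
        have hmueq : mu j = lam j := by rw [hmu]; simp [hcj]
        rw [hF, mem_filter] at hjF
        push_neg at hjF
        rcases em (lam j = 0) with h | h
        · exact hj0 (by rw [hmueq, h])
        · exact hj1 (by rw [hmueq, hjF hjA h])
      refine mem_erase.mpr ⟨?_, hjF⟩
      rintro rfl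
      rcases histar with h | h
      · exact hj0 h
      · exact hj1 h
    have hclt : (A.filter (fun i => mu i ≠ 0 ∧ mu i ≠ 1)).card ≤ n := by
      have h5 := Finset.card_le_card hsubset
      have h6 : (F.erase istar).card = F.card - 1 :=
        Finset.card_erase_of_mem (mem_filter.mp hiS).1
      omega
    exact ih mu hbox hmusum hmuvec hclt

lemma exists_zero_step (x : Fin M → (Fin k → ℝ)) (A : Finset (Fin M)) (hk : k < A.card)
    (lam : Fin M → ℝ) (h1 : ∀ i ∈ A, lam i ∈ Set.Icc (0:ℝ) 1)
    (h2 : ∑ i ∈ A, lam i = (A.card : ℝ) - k) (h3 : ∑ i ∈ A, lam i • x i = 0) :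
    ∃ i ∈ A, ∃ mu : Fin M → ℝ, (∀ j ∈ A.erase i, mu j ∈ Set.Icc (0:ℝ) 1) ∧
      (∑ j ∈ A.erase i, mu j = ((A.card : ℝ) - 1) - k) ∧
      (∑ j ∈ A.erase i, mu j • x j = 0) := by
  classical
  have hkR : (k:ℝ) < A.card := by exact_mod_cast hk
  have hk1R : (k:ℝ) + 1 ≤ A.card := by exact_mod_cast hk
  have hs : (0:ℝ) < (A.card : ℝ) - k := by linarith
  set ρ : ℝ := ((A.card : ℝ) - 1 - k) / ((A.card : ℝ) - k) with hρ
  have hρ0 : 0 ≤ ρ := div_nonneg (by linarith) hs.le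
  have hρ1 : ρ ≤ 1 := by
    rw [hρ, div_le_one hs]; linarith
  have hbox' : ∀ i ∈ A, ρ * lam i ∈ Set.Icc (0:ℝ) 1 := by
    intro i hi
    obtain ⟨ha, hb⟩ := h1 i hi
    constructor
    · exact mul_nonneg hρ0 ha
    · calc ρ * lam i ≤ 1 * 1 := by
            apply mul_le_mul hρ1 hb ha (by norm_num)
        _ = 1 := by norm_num
  have hsum' : ∑ i ∈ A, ρ * lam i = (A.card : ℝ) - 1 - k := by
    rw [← Finset.mul_sum, h2, hρ, div_mul_cancel₀ _ (ne_of_gt hs)]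
  have hvec' : ∑ i ∈ A, (ρ * lam i) • x i = 0 := by
    have : ∑ i ∈ A, (ρ * lam i) • x i = ρ • ∑ i ∈ A, lam i • x i := by
      rw [Finset.smul_sum]
      exact Finset.sum_congr rfl (fun i _ => by rw [smul_smul])
    rw [this, h3, smul_zero]
  obtain ⟨mu, hbox, hsum, hvec, hfc⟩ := reduce x A ((A.card:ℝ) - 1 - k) A.card
    (fun i => ρ * lam i) hbox' hsum' hvec'
    (le_trans (Finset.card_filter_le _ _) (le_refl _))
  -- there exists a zero coordinate
  have hzero : ∃ i ∈ A, mu i = 0 := by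
    by_contra hcon
    push_neg at hcon
    set F := A.filter (fun i => mu i ≠ 0 ∧ mu i ≠ 1) with hF
    set O := A.filter (fun i => mu i = 1) with hO
    have hdisj : Disjoint O F := by
      rw [Finset.disjoint_left]
      intro a haO haF
      exact ((mem_filter.mp haF).2).2 ((mem_filter.mp haO).2)
    have hunion : O ∪ F = A := by
      ext i
      constructor
      · intro hi
        rcases Finset.mem_union.mp hi with h | h
        · exact (mem_filter.mp h).1
        · exact (mem_filter.mp h).1
      · intro hi
        rcases em (mu i = 1) with h | h
        · exact Finset.mem_union.mpr (Or.inl (mem_filter.mpr ⟨hi, h⟩))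
        · exact Finset.mem_union.mpr (Or.inr (mem_filter.mpr ⟨hi, hcon i hi, h⟩))
    have hcardsum : O.card + F.card = A.card := by
      rw [← Finset.card_union_of_disjoint hdisj, hunion]
    have hsplit : (O.card : ℝ) + ∑ i ∈ F, mu i = (A.card : ℝ) - 1 - k := by
      rw [← hsum, ← hunion, Finset.sum_union hdisj]
      congr 1
      rw [Finset.sum_congr rfl (fun i hi => (mem_filter.mp hi).2)]
      simp
      rfl
    have hOcard : (A.card : ℝ) - 1 - k ≤ (O.card : ℝ) := by
      have : A.card ≤ O.card + (k + 1) := by omega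
      have := (Nat.cast_le (α := ℝ)).mpr this
      push_cast at this
      linarith
    have hFsum : ∑ i ∈ F, mu i ≤ 0 := by linarith
    have hFempty : F = ∅ := by
      by_contra hne
      have hne' : F.Nonempty := Finset.nonempty_iff_ne_empty.mpr hne
      have : 0 < ∑ i ∈ F, mu i := by
        apply Finset.sum_pos _ hne'
        intro i hi
        have hiA := (mem_filter.mp hi).1
        exact lt_of_le_of_ne (hbox i hiA).1 (Ne.symm (mem_filter.mp hi).2.1)
      linarith
    have hFcard0 : F.card = 0 := by rw [hFempty]; simp
    have : (O.card : ℝ) = (A.card : ℝ) - 1 - k := by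
      rw [hFempty] at hsplit
      simpa using hsplit
    have hOA : O.card = A.card := by omega
    rw [hOA] at this
    have : (0:ℝ) ≤ k := Nat.cast_nonneg k
    linarith
  obtain ⟨i, hiA, hmui⟩ := hzero
  refine ⟨i, hiA, mu, fun j hj => hbox j (Finset.mem_of_mem_erase hj), ?_, ?_⟩
  · rw [Finset.sum_erase _ (by rw [hmui])]
    exact hsum
  · rw [Finset.sum_erase _ (by rw [hmui, zero_smul])]
    exact hvec

lemma bound_of_feas (x : Fin M → (Fin k → ℝ))
    (hN1 : ∀ v w : Fin k → ℝ, N (v + w) ≤ N v + N w)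
    (hN2 : ∀ (c : ℝ) (v : Fin k → ℝ), N (c • v) = |c| * N v)
    (hbd : ∀ i, N (x i) ≤ 1) (A : Finset (Fin M)) (lam : Fin M → ℝ)
    (h1 : ∀ i ∈ A, lam i ∈ Set.Icc (0:ℝ) 1)
    (h2 : ∑ i ∈ A, lam i = (A.card : ℝ) - k) (h3 : ∑ i ∈ A, lam i • x i = 0) :
    N (∑ i ∈ A, x i) ≤ k := by
  have key : ∑ i ∈ A, x i = ∑ i ∈ A, (1 - lam i) • x i := by
    have : ∀ i ∈ A, (1 - lam i) • x i = x i - lam i • x i := by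
      intro i _
      rw [sub_smul, one_smul]
    rw [Finset.sum_congr rfl this, Finset.sum_sub_distrib, h3, sub_zero]
  rw [key]
  calc N (∑ i ∈ A, (1 - lam i) • x i) ≤ ∑ i ∈ A, N ((1 - lam i) • x i) :=
        N_sum hN1 hN2 A _
    _ = ∑ i ∈ A, (1 - lam i) * N (x i) := by
        apply Finset.sum_congr rfl
        intro i hi
        rw [hN2, abs_of_nonneg (by linarith [(h1 i hi).2])]
    _ ≤ ∑ i ∈ A, (1 - lam i) := by
        apply Finset.sum_le_sum
        intro i hi
        have h0 : 0 ≤ N (x i) := N_nonneg hN1 hN2 _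
        have hl1 : lam i ≤ 1 := (h1 i hi).2
        nlinarith [hbd i]
    _ = (A.card : ℝ) - ((A.card : ℝ) - k) := by
        rw [Finset.sum_sub_distrib, h2]
        simp
    _ = k := by ring

lemma key_list (x : Fin M → (Fin k → ℝ))
    (hN1 : ∀ v w : Fin k → ℝ, N (v + w) ≤ N v + N w)
    (hN2 : ∀ (c : ℝ) (v : Fin k → ℝ), N (c • v) = |c| * N v)
    (hbd : ∀ i, N (x i) ≤ 1) :
    ∀ n (A : Finset (Fin M)), A.card = n →
      (∀ _ : k < A.card, ∃ lam : Fin M → ℝ, (∀ i ∈ A, lam i ∈ Set.Icc (0:ℝ) 1) ∧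
        (∑ i ∈ A, lam i = (A.card : ℝ) - k) ∧ (∑ i ∈ A, lam i • x i = 0)) →
      ∃ l : List (Fin M), l.Nodup ∧ l.toFinset = A ∧
        ∀ r : ℕ, N (∑ i ∈ (l.take r).toFinset, x i) ≤ k := by
  intro n
  induction n using Nat.strong_induction_on with
  | _ n ih =>
    intro A hcard hfeas
    by_cases hk : k < A.card
    · -- inductive case
      obtain ⟨lam, hl1, hl2, hl3⟩ := hfeas hk
      obtain ⟨i, hiA, mu, hm1, hm2, hm3⟩ := exists_zero_step x A hk lam hl1 hl2 hl3
      have hcard' : (A.erase i).card = n - 1 := by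
        rw [Finset.card_erase_of_mem hiA, hcard]
      have hn1 : n - 1 < n := by omega
      have hfeas' : ∀ _ : k < (A.erase i).card, ∃ lam : Fin M → ℝ,
          (∀ j ∈ A.erase i, lam j ∈ Set.Icc (0:ℝ) 1) ∧
          (∑ j ∈ A.erase i, lam j = ((A.erase i).card : ℝ) - k) ∧
          (∑ j ∈ A.erase i, lam j • x j = 0) := by
        intro _
        refine ⟨mu, hm1, ?_, hm3⟩
        rw [Finset.card_erase_of_mem hiA]
        have h1n : 1 ≤ A.card := by omega
        rw [hm2]
        congr 1
        rw [Nat.cast_sub h1n]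
        simp
      obtain ⟨l', hnd', htf', hbound'⟩ := ih (n-1) hn1 (A.erase i) hcard' hfeas'
      refine ⟨l' ++ [i], ?_, ?_, ?_⟩
      · rw [List.nodup_append]
        refine ⟨hnd', List.nodup_singleton i, ?_⟩
        intro a ha b hb
        rw [List.mem_singleton] at hb
        rw [hb]; intro hb
        have hae : a ∈ A.erase i := by rw [← htf']; exact List.mem_toFinset.mpr ha
        exact (Finset.mem_erase.mp hae).1 hb
      · rw [List.toFinset_append, htf']
        simp only [List.toFinset_cons, List.toFinset_nil, insert_empty_eq]
        rw [Finset.union_comm]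
        exact Finset.insert_erase hiA
      · intro r
        rcases le_or_gt r l'.length with hr | hr
        · rw [List.take_append_of_le_length hr]
          exact hbound' r
        · have hlen : (l' ++ [i]).length ≤ r := by
            rw [List.length_append, List.length_singleton]
            have : l'.length + 1 ≤ r := hr
            omega
          rw [List.take_of_length_le hlen]
          have : (l' ++ [i]).toFinset = A := by
            rw [List.toFinset_append, htf']
            simp only [List.toFinset_cons, List.toFinset_nil, insert_empty_eq]
            rw [Finset.union_comm]
            exact Finset.insert_erase hiA
          rw [this]
          exact bound_of_feas x hN1 hN2 hbd A lam hl1 hl2 hl3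
    · -- base case: A.card ≤ k
      push_neg at hk
      refine ⟨A.toList, A.nodup_toList, A.toList_toFinset, ?_⟩
      intro r
      have hsub : (A.toList.take r).toFinset ⊆ A := by
        intro j hj
        rw [List.mem_toFinset] at hj
        have := List.mem_of_mem_take hj
        rw [← A.toList_toFinset]
        exact List.mem_toFinset.mpr this
      calc N (∑ i ∈ (A.toList.take r).toFinset, x i)
          ≤ ∑ i ∈ (A.toList.take r).toFinset, N (x i) := N_sum hN1 hN2 _ _
        _ ≤ ∑ i ∈ (A.toList.take r).toFinset, 1 := Finset.sum_le_sum (fun i _ => hbd i)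
        _ = ((A.toList.take r).toFinset.card : ℝ) := by simp
        _ ≤ (A.card : ℝ) := by exact_mod_cast Finset.card_le_card hsub
        _ ≤ k := by exact_mod_cast hk

end SteinitzAux

/-- Steinitz lemma (Grinberg–Sevastyanov constant k): a zero-sum sequence of
vectors of norm at most 1 in ℝ^k can be permuted so that all prefix sums have
norm at most k. -/
theorem stmt3 (k M : ℕ) (x : Fin M → (Fin k → ℝ)) (N : (Fin k → ℝ) → ℝ)
    (hN1 : ∀ v w : Fin k → ℝ, N (v + w) ≤ N v + N w)
    (hN2 : ∀ (c : ℝ) (v : Fin k → ℝ), N (c • v) = |c| * N v)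
    (hsum : ∑ i, x i = 0) (hbd : ∀ i, N (x i) ≤ 1) :
    ∃ π : Equiv.Perm (Fin M), ∀ r : ℕ, r ≤ M →
      N (∑ i ∈ Finset.univ.filter (fun i : Fin M => (i : ℕ) < r), x (π i)) ≤ k := by
  classical
  have hfeas : ∀ _ : k < (Finset.univ : Finset (Fin M)).card, ∃ lam : Fin M → ℝ,
      (∀ i ∈ (Finset.univ : Finset (Fin M)), lam i ∈ Set.Icc (0:ℝ) 1) ∧
      (∑ i ∈ (Finset.univ : Finset (Fin M)), lam i
        = (((Finset.univ : Finset (Fin M)).card : ℝ)) - k) ∧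
      (∑ i ∈ (Finset.univ : Finset (Fin M)), lam i • x i = 0) := by
    intro hkM
    rw [Finset.card_univ, Fintype.card_fin] at hkM
    have hkR : (k:ℝ) < M := by exact_mod_cast hkM
    have hM0 : (0:ℝ) < M := by
      have : 0 < M := by omega
      exact_mod_cast this
    refine ⟨fun _ => ((M:ℝ) - k)/M, fun i _ =>
      ⟨div_nonneg (by linarith) hM0.le, by rw [div_le_one hM0]; linarith⟩, ?_, ?_⟩
    · simp only [Finset.sum_const, Finset.card_univ, Fintype.card_fin, nsmul_eq_mul]
      field_simp
    · rw [← Finset.smul_sum, hsum, smul_zero]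
  obtain ⟨l, hnd, htf, hbound⟩ :=
    key_list x hN1 hN2 hbd (Finset.univ : Finset (Fin M)).card Finset.univ rfl hfeas
  have hlen : l.length = M := by
    have h := List.toFinset_card_of_nodup hnd
    rw [htf, Finset.card_univ, Fintype.card_fin] at h
    omega
  have hinj : Function.Injective (fun i : Fin M => l.get (Fin.cast hlen.symm i)) :=
    fun a b hab => Fin.cast_injective hlen.symm ((List.nodup_iff_injective_get.mp hnd) hab)
  have hbij := Finite.injective_iff_bijective.mp hinj
  refine ⟨Equiv.ofBijective _ hbij, ?_⟩
  intro r hr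
  set π := Equiv.ofBijective _ hbij with hπ
  have hπap : ∀ i, π i = l.get (Fin.cast hlen.symm i) := fun i => rfl
  have himg : (Finset.univ.filter (fun i : Fin M => (i:ℕ) < r)).image π
      = (l.take r).toFinset := by
    apply Finset.eq_of_subset_of_card_le
    · intro j hj
      rw [Finset.mem_image] at hj
      obtain ⟨i, hi, rfl⟩ := hj
      rw [Finset.mem_filter] at hi
      rw [List.mem_toFinset, hπap]
      set i' := Fin.cast hlen.symm i with hi'
      have hi'r : (i' : ℕ) < r := by simpa [hi'] using hi.2
      have hlt : (i':ℕ) < (l.take r).length := by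
        rw [List.length_take]; exact lt_min hi'r i'.2
      have h2 : (l.take r)[(i':ℕ)]'hlt = l[(i':ℕ)] := List.getElem_take
      rw [List.get_eq_getElem, ← h2]
      exact List.getElem_mem hlt
    · have hc1 : ((l.take r).toFinset).card = r := by
        rw [List.toFinset_card_of_nodup (List.Nodup.sublist (List.take_sublist _ _) hnd)]
        rw [List.length_take, hlen]
        omega
      have hc2 : (Finset.univ.filter (fun i : Fin M => (i:ℕ) < r)).card = r := by
        have heq : Finset.univ.filter (fun i : Fin M => (i:ℕ) < r)
            = Finset.map (Fin.castLEEmb hr) Finset.univ := by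
          ext j
          simp only [Finset.mem_filter, Finset.mem_map, Finset.mem_univ, true_and]
          constructor
          · intro hj
            exact ⟨⟨j, hj⟩, rfl⟩
          · rintro ⟨a, rfl⟩
            exact a.2
        rw [heq, Finset.card_map, Finset.card_univ, Fintype.card_fin]
      rw [hc1, Finset.card_image_of_injective _ π.injective, hc2]
  rw [← Finset.sum_image (fun a _ b _ h => π.injective h), himg]
  exact hbound r
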